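/- Fix β real with 0 < |β| < 1, α = √(1−β²), x₁, x₂ ∈ ℝ with x₁ ≠ (π/α)(1/2+k) for every integer k. Define μ_K(x) = 1/cosh(β(x+x₂)+iα x₁) and μ_B(x) = cosh(β(x+x₂)+iα x₁)/(α² cosh²(β(x+x₂)) + β² sin²(α x₁)). Let B, Bₜ be the breather profile and K, Kₜ the complex kink profile with parameters (β, x₁, x₂). Then for all x ∈ ℝ: (a) μ_K(x) = K′(x)/(2β) and μ_B(x) = (β Bₜ(x) − iα B′(x))/(4α²β²); (b) μ_K′(x) − β·cos(K(x)/2)·μ_K(x) = 0; (c) μ_B′(x) − [((β−iα)/2)·cos((B(x)+K(x))/2) + ((β+iα)/2)·cos((B(x)−K(x))/2)]·μ_B(x) = 0. -/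

import Mathlib

open Complex


lemma two_arctan_eq {z : ℂ} : 2 * arctan z = -I * Complex.log ((1 + z * I) / (1 - z * I)) := by
  rw [Complex.arctan]; ring

lemma aux_factor {z : ℂ} : (1 + z * I) * (1 - z * I) = 1 + z ^ 2 := by
  have := Complex.I_sq
  linear_combination (-(z^2) : ℂ) * this

lemma aux_ne₁ {z : ℂ} (h : 1 + z ^ 2 ≠ 0) : 1 + z * I ≠ 0 :=
  fun h0 => h (by rw [← aux_factor, h0, zero_mul])

lemma aux_ne₂ {z : ℂ} (h : 1 + z ^ 2 ≠ 0) : 1 - z * I ≠ 0 :=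
  fun h0 => h (by rw [← aux_factor, h0, mul_zero])

lemma aux_cos_two_arctan {z : ℂ} (h : 1 + z ^ 2 ≠ 0) :
    Complex.cos (2 * arctan z) = (1 - z ^ 2) / (1 + z ^ 2) := by
  have h1 := aux_ne₁ h
  have h2 := aux_ne₂ h
  have hw : (1 + z * I) / (1 - z * I) ≠ 0 := div_ne_zero h1 h2
  rw [← Complex.cosh_mul_I, two_arctan_eq]
  have heq : -I * Complex.log ((1 + z * I) / (1 - z * I)) * I
      = Complex.log ((1 + z * I) / (1 - z * I)) := by
    have h' := Complex.I_sq
    linear_combination (-(Complex.log ((1 + z * I) / (1 - z * I))) : ℂ) * h'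
  rw [heq]
  unfold Complex.cosh
  rw [Complex.exp_neg, Complex.exp_log hw]
  rw [inv_div]
  field_simp
  ring_nf
  rw [Complex.I_sq]
  ring

lemma aux_sin_two_arctan {z : ℂ} (h : 1 + z ^ 2 ≠ 0) :
    Complex.sin (2 * arctan z) = 2 * z / (1 + z ^ 2) := by
  have h1 := aux_ne₁ h
  have h2 := aux_ne₂ h
  have hw : (1 + z * I) / (1 - z * I) ≠ 0 := div_ne_zero h1 h2
  have heq : 2 * arctan z * I = Complex.log ((1 + z * I) / (1 - z * I)) := by
    rw [two_arctan_eq]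
    have h' := Complex.I_sq
    linear_combination (-(Complex.log ((1 + z * I) / (1 - z * I))) : ℂ) * h'
  have hs := Complex.sinh_mul_I (x := 2 * arctan z)
  rw [heq] at hs
  unfold Complex.sinh at hs
  rw [Complex.exp_neg, Complex.exp_log hw, inv_div] at hs
  have hIne : (I : ℂ) ≠ 0 := Complex.I_ne_zero
  have key : Complex.sin (2 * arctan z) * I = 2 * z * I / (1 + z ^ 2) := by
    rw [← hs]
    field_simp
    linear_combination (4 * z ^ 3 * I) * Complex.I_sq
  rw [eq_div_iff h]
  have h3 : Complex.sin (2 * arctan z) * I * (1 + z ^ 2) = 2 * z * I := by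
    rw [key]; field_simp
  linear_combination (-I) * h3 + (Complex.sin (2 * arctan z) * (1 + z ^ 2) - 2 * z) * Complex.I_sq

lemma real_cos_two_arctan (u : ℝ) : Real.cos (2 * Real.arctan u) = (1 - u ^ 2) / (1 + u ^ 2) := by
  have hpos : (0:ℝ) < 1 + u ^ 2 := by positivity
  rw [Real.cos_two_mul, Real.cos_arctan]
  rw [div_pow, one_pow, Real.sq_sqrt hpos.le]
  field_simp
  ring

lemma real_sin_two_arctan (u : ℝ) : Real.sin (2 * Real.arctan u) = 2 * u / (1 + u ^ 2) := by
  have hpos : (0:ℝ) < 1 + u ^ 2 := by positivity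
  rw [Real.sin_two_mul, Real.sin_arctan, Real.cos_arctan]
  rw [show (2:ℝ) * (u / Real.sqrt (1 + u ^ 2)) * (1 / Real.sqrt (1 + u ^ 2))
      = 2 * u / (Real.sqrt (1 + u ^ 2) * Real.sqrt (1 + u ^ 2)) by ring,
    Real.mul_self_sqrt hpos.le]

lemma hasDerivAt_carctan {g : ℝ → ℂ} {g' : ℂ} {x : ℝ} (hg : HasDerivAt g g' x)
    (h : (g x).re ≠ 0) :
    HasDerivAt (fun y => Complex.arctan (g y)) (g' / (1 + g x ^ 2)) x := by
  set z := g x with hz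
  have h1 : 1 + z * I ≠ 0 := by
    intro h0
    have hzi : z = I := by linear_combination (-I) * h0 + z * Complex.I_sq
    rw [hzi] at h; simp at h
  have h2 : 1 - z * I ≠ 0 := by
    intro h0
    have hzi : z = -I := by linear_combination I * h0 + z * Complex.I_sq
    rw [hzi] at h; simp at h
  have h12 : 1 + z ^ 2 ≠ 0 := by rw [← aux_factor]; exact mul_ne_zero h1 h2
  have hnsq : Complex.normSq (1 - z * I) ≠ 0 := by
    simpa using h2
  have him : ((1 + z * I) / (1 - z * I)).im = 2 * z.re / Complex.normSq (1 - z * I) := by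
    rw [Complex.div_im]
    simp [Complex.add_im, Complex.add_re, Complex.sub_im, Complex.sub_re, Complex.mul_im,
      Complex.mul_re, Complex.I_re, Complex.I_im]
    ring
  have hslit : (1 + z * I) / (1 - z * I) ∈ Complex.slitPlane := by
    rw [Complex.mem_slitPlane_iff]
    right
    rw [him]
    exact div_ne_zero (by simpa using h) hnsq
  have hnum : HasDerivAt (fun y => 1 + g y * I) (g' * I) x := (hg.mul_const I).const_add 1
  have hden : HasDerivAt (fun y => 1 - g y * I) (-(g' * I)) x := by
    simpa using (hg.mul_const I).const_sub 1
  have hwd : HasDerivAt (fun y => (1 + g y * I) / (1 - g y * I))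
      (2 * I * g' / (1 - z * I) ^ 2) x := by
    have := hnum.div hden h2
    refine this.congr_deriv ?_
    field_simp
    ring
  have hlog := (Complex.hasDerivAt_log hslit).comp x hwd
  have hfin := hlog.const_mul (-I / 2)
  have hfun : (fun y => Complex.arctan (g y))
      = fun y => -I / 2 * (Complex.log ∘ fun y => (1 + g y * I) / (1 - g y * I)) y := by
    funext y
    simp [Complex.arctan, Function.comp]
  rw [hfun]
  refine hfin.congr_deriv ?_
  rw [← aux_factor]
  have hwne : (1 + z * I) / (1 - z * I) ≠ 0 := div_ne_zero h1 h2
  field_simp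
  rw [Complex.I_sq]; ring

set_option maxHeartbeats 2000000 in
/-- **Integrating factors for the linearized Bäcklund ODEs (Lemma 6.2, parts (a)–(c)).**
With `0 < |β| < 1`, `α = √(1−β²)` and `x₁` nondegenerate, the functions
`μ_K = sech(β(x+x₂)+iαx₁)` and `μ_B = cosh(β(x+x₂)+iαx₁)/(α²cosh²(β(x+x₂))+β²sin²(αx₁))`
satisfy `μ_K = K′/(2β)`, `μ_B = (βBₜ − iαB′)/(4α²β²)`, and the first-order ODEs
`μ_K′ = β cos(K/2) μ_K` and
`μ_B′ = [((β−iα)/2)cos((B+K)/2) + ((β+iα)/2)cos((B−K)/2)] μ_B`. -/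
theorem integrating_factors_breather_kink (β x₁ x₂ : ℝ)
    (hβ0 : 0 < |β|) (hβ1 : |β| < 1)
    (α : ℝ) (hα : α = Real.sqrt (1 - β ^ 2))
    (hx₁ : ∀ k : ℤ, x₁ ≠ (Real.pi / α) * (1 / 2 + (k : ℝ)))
    (θ : ℝ → ℂ)
    (hθ : ∀ x : ℝ, θ x = (β : ℂ) * ((x : ℂ) + (x₂ : ℂ)) + Complex.I * (α : ℂ) * (x₁ : ℂ))
    (μK μB : ℝ → ℂ)
    (hμK : ∀ x : ℝ, μK x = (Complex.cosh (θ x))⁻¹)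
    (hμB : ∀ x : ℝ, μB x = Complex.cosh (θ x)
      / ((α ^ 2 * (Real.cosh (β * (x + x₂))) ^ 2
          + β ^ 2 * (Real.sin (α * x₁)) ^ 2 : ℝ) : ℂ))
    (B Bt : ℝ → ℝ)
    (hB : ∀ x : ℝ, B x
      = 4 * Real.arctan (β * Real.sin (α * x₁) / (α * Real.cosh (β * (x + x₂)))))
    (hBt : ∀ x : ℝ, Bt x
      = 4 * α ^ 2 * β * Real.cos (α * x₁) * Real.cosh (β * (x + x₂))
          / (α ^ 2 * (Real.cosh (β * (x + x₂))) ^ 2 + β ^ 2 * (Real.sin (α * x₁)) ^ 2))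
    (K Kt : ℝ → ℂ)
    (hK : ∀ x : ℝ, K x = 4 * Complex.arctan (Complex.exp (θ x)))
    (hKt : ∀ x : ℝ, Kt x
      = 4 * Complex.I * (α : ℂ) * Complex.exp (θ x) / (1 + Complex.exp (2 * θ x))) :
    -- (a)
    (∀ x : ℝ, μK x = deriv K x / (2 * (β : ℂ))) ∧
    (∀ x : ℝ, μB x
      = ((β : ℂ) * (Bt x : ℂ) - Complex.I * (α : ℂ) * ((deriv B x : ℝ) : ℂ))
          / (4 * (α : ℂ) ^ 2 * (β : ℂ) ^ 2)) ∧
    -- (b)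
    (∀ x : ℝ, deriv μK x - (β : ℂ) * Complex.cos (K x / 2) * μK x = 0) ∧
    -- (c)
    (∀ x : ℝ, deriv μB x
      - ((((β : ℂ) - Complex.I * (α : ℂ)) / 2) * Complex.cos (((B x : ℂ) + K x) / 2)
        + (((β : ℂ) + Complex.I * (α : ℂ)) / 2) * Complex.cos (((B x : ℂ) - K x) / 2))
        * μB x = 0) := by
  -- basic facts
  have hβne : β ≠ 0 := by simpa using hβ0.ne'
  have hβC : (β : ℂ) ≠ 0 := by exact_mod_cast hβne
  have hβsq : β ^ 2 < 1 := by
    have := abs_lt.mp hβ1; nlinarith [this.1, this.2]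
  have hαpos : 0 < α := by rw [hα]; exact Real.sqrt_pos.mpr (by nlinarith)
  have hαne : α ≠ 0 := hαpos.ne'
  have hαC : (α : ℂ) ≠ 0 := by exact_mod_cast hαne
  have hcb : Real.cos (α * x₁) ≠ 0 := by
    intro h0
    rw [Real.cos_eq_zero_iff] at h0
    obtain ⟨k, hk⟩ := h0
    apply hx₁ k
    field_simp
    linear_combination 2 * hk
  have main : ∀ x : ℝ,
      (μK x = deriv K x / (2 * (β : ℂ))) ∧
      (μB x = ((β : ℂ) * (Bt x : ℂ) - Complex.I * (α : ℂ) * ((deriv B x : ℝ) : ℂ))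
          / (4 * (α : ℂ) ^ 2 * (β : ℂ) ^ 2)) ∧
      (deriv μK x - (β : ℂ) * Complex.cos (K x / 2) * μK x = 0) ∧
      (deriv μB x
        - ((((β : ℂ) - Complex.I * (α : ℂ)) / 2) * Complex.cos (((B x : ℂ) + K x) / 2)
          + (((β : ℂ) + Complex.I * (α : ℂ)) / 2) * Complex.cos (((B x : ℂ) - K x) / 2))
          * μB x = 0) := by
    intro x
    have hcapos : 0 < Real.cosh (β * (x + x₂)) := Real.cosh_pos _
    have hcane : Real.cosh (β * (x + x₂)) ≠ 0 := hcapos.ne'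
    have hDpos : 0 < α ^ 2 * (Real.cosh (β * (x + x₂))) ^ 2 + β ^ 2 * (Real.sin (α * x₁)) ^ 2 := by
      have h1 : 0 < α ^ 2 * (Real.cosh (β * (x + x₂))) ^ 2 := by positivity
      have h2 : 0 ≤ β ^ 2 * (Real.sin (α * x₁)) ^ 2 := by positivity
      linarith
    have hDne : α ^ 2 * (Real.cosh (β * (x + x₂))) ^ 2 + β ^ 2 * (Real.sin (α * x₁)) ^ 2 ≠ 0 :=
      hDpos.ne'
    have hDC : ((α ^ 2 * (Real.cosh (β * (x + x₂))) ^ 2 + β ^ 2 * (Real.sin (α * x₁)) ^ 2 : ℝ) : ℂ)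
        ≠ 0 := by exact_mod_cast hDne
    have hab : θ x = ((β * (x + x₂) : ℝ) : ℂ) + ((α * x₁ : ℝ) : ℂ) * I := by
      rw [hθ]; push_cast; ring
    have hC : Complex.cosh (θ x)
        = ((Real.cosh (β * (x + x₂)) * Real.cos (α * x₁) : ℝ) : ℂ)
          + ((Real.sinh (β * (x + x₂)) * Real.sin (α * x₁) : ℝ) : ℂ) * I := by
      rw [hab, Complex.cosh_add, Complex.cosh_mul_I, Complex.sinh_mul_I]
      push_cast; ring
    have hS : Complex.sinh (θ x)
        = ((Real.sinh (β * (x + x₂)) * Real.cos (α * x₁) : ℝ) : ℂ)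
          + ((Real.cosh (β * (x + x₂)) * Real.sin (α * x₁) : ℝ) : ℂ) * I := by
      rw [hab, Complex.sinh_add, Complex.cosh_mul_I, Complex.sinh_mul_I]
      push_cast; ring
    have hCne : Complex.cosh (θ x) ≠ 0 := by
      intro h0
      rw [hC] at h0
      have h1 := congrArg Complex.re h0
      simp only [Complex.add_re, Complex.mul_re, Complex.I_re, Complex.I_im,
        Complex.ofReal_re, Complex.ofReal_im, Complex.zero_re, mul_zero, mul_one,
        zero_mul, sub_zero, add_zero, zero_add, zero_sub, neg_zero] at h1
      exact (mul_ne_zero hcane hcb) h1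
    have hzne : Complex.exp (θ x) ≠ 0 := Complex.exp_ne_zero _
    have h2z : 1 + Complex.exp (θ x) ^ 2 = 2 * Complex.exp (θ x) * Complex.cosh (θ x) := by
      have hch : Complex.cosh (θ x) = (Complex.exp (θ x) + Complex.exp (-θ x)) / 2 := rfl
      rw [hch, Complex.exp_neg]
      field_simp
      ring
    have h1mz : 1 - Complex.exp (θ x) ^ 2 = -(2 * Complex.exp (θ x) * Complex.sinh (θ x)) := by
      have hsh : Complex.sinh (θ x) = (Complex.exp (θ x) - Complex.exp (-θ x)) / 2 := rfl
      rw [hsh, Complex.exp_neg]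
      field_simp
      ring
    have h1z : 1 + Complex.exp (θ x) ^ 2 ≠ 0 := by
      rw [h2z]; exact mul_ne_zero (mul_ne_zero two_ne_zero hzne) hCne
    have hzre : (Complex.exp (θ x)).re ≠ 0 := by
      rw [Complex.exp_re]
      have h1 : (θ x).re = β * (x + x₂) := by rw [hab]; simp
      have h2 : (θ x).im = α * x₁ := by rw [hab]; simp
      rw [h1, h2]
      exact mul_ne_zero (Real.exp_pos _).ne' hcb
    -- derivative of θ
    have hid : HasDerivAt (fun y : ℝ => ((y : ℝ) : ℂ)) 1 x := by
      simpa using (hasDerivAt_id x).ofReal_comp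
    have hθ' : HasDerivAt θ (β : ℂ) x := by
      have h := ((hid.add_const (x₂ : ℂ)).const_mul (β : ℂ)).add_const (I * (α : ℂ) * (x₁ : ℂ))
      have hfun : θ = fun y : ℝ =>
          (β : ℂ) * (((y : ℝ) : ℂ) + (x₂ : ℂ)) + I * (α : ℂ) * (x₁ : ℂ) := funext hθ
      rw [hfun]
      simpa using h
    have hzd : HasDerivAt (fun y => Complex.exp (θ y)) (Complex.exp (θ x) * (β : ℂ)) x := hθ'.cexp
    have hcoshC : HasDerivAt (fun y => Complex.cosh (θ y)) (Complex.sinh (θ x) * (β : ℂ)) x := by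
      have := HasDerivAt.comp (x := x) (Complex.hasDerivAt_cosh (θ x)) hθ'
      exact this
    -- derivative of K
    have harc : HasDerivAt (fun y => Complex.arctan (Complex.exp (θ y)))
        (Complex.exp (θ x) * (β : ℂ) / (1 + Complex.exp (θ x) ^ 2)) x :=
      hasDerivAt_carctan hzd hzre
    have hKd : HasDerivAt K (2 * (β : ℂ) / Complex.cosh (θ x)) x := by
      have hfun : K = fun y => 4 * Complex.arctan (Complex.exp (θ y)) := funext hK
      rw [hfun]
      have h4 := harc.const_mul (4 : ℂ)
      refine h4.congr_deriv ?_
      rw [h2z]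
      field_simp
      ring
    -- real derivatives
    have hcoshR : HasDerivAt (fun y => Real.cosh (β * (y + x₂)))
        (Real.sinh (β * (x + x₂)) * β) x := by
      have := (((hasDerivAt_id x).add_const x₂).const_mul β).cosh
      simpa [mul_comm] using this
    have hu : HasDerivAt (fun y => β * Real.sin (α * x₁) / (α * Real.cosh (β * (y + x₂))))
        (-(β ^ 2 * Real.sin (α * x₁) * Real.sinh (β * (x + x₂)))
          / (α * (Real.cosh (β * (x + x₂))) ^ 2)) x := by
      have hgd : HasDerivAt (fun y => α * Real.cosh (β * (y + x₂)))
          (α * (Real.sinh (β * (x + x₂)) * β)) x := hcoshR.const_mul α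
      have hdiv := (hasDerivAt_const x (β * Real.sin (α * x₁))).div hgd
        (mul_ne_zero hαne hcane)
      refine hdiv.congr_deriv ?_
      field_simp
      ring
    have hBd : HasDerivAt B
        (-(4 * α * β ^ 2 * Real.sin (α * x₁) * Real.sinh (β * (x + x₂)))
          / (α ^ 2 * (Real.cosh (β * (x + x₂))) ^ 2 + β ^ 2 * (Real.sin (α * x₁)) ^ 2)) x := by
      have hfun : B = fun y =>
          4 * Real.arctan (β * Real.sin (α * x₁) / (α * Real.cosh (β * (y + x₂)))) := funext hB
      rw [hfun]
      have harc' := (Real.hasDerivAt_arctan (β * Real.sin (α * x₁)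
        / (α * Real.cosh (β * (x + x₂))))).comp x hu
      have h4 := harc'.const_mul 4
      refine h4.congr_deriv ?_
      have h1u : (0:ℝ) < 1 + (β * Real.sin (α * x₁) / (α * Real.cosh (β * (x + x₂)))) ^ 2 := by
        positivity
      field_simp
    -- derivative of μK
    have hμKd : HasDerivAt μK (-(Complex.sinh (θ x) * (β : ℂ)) / Complex.cosh (θ x) ^ 2) x := by
      have hfun : μK = fun y => (Complex.cosh (θ y))⁻¹ := funext hμK
      rw [hfun]
      have hd := (hasDerivAt_const x (1 : ℂ)).div hcoshC hCne
      have heq : (fun y => (Complex.cosh (θ y))⁻¹) = fun y => 1 / Complex.cosh (θ y) := by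
        funext y; rw [one_div]
      rw [heq]
      refine hd.congr_deriv ?_
      field_simp
      ring
    -- derivative of μB
    have hDd : HasDerivAt (fun y => α ^ 2 * (Real.cosh (β * (y + x₂))) ^ 2
        + β ^ 2 * (Real.sin (α * x₁)) ^ 2)
        (2 * α ^ 2 * Real.cosh (β * (x + x₂)) * Real.sinh (β * (x + x₂)) * β) x := by
      have := ((hcoshR.pow 2).const_mul (α ^ 2)).add_const (β ^ 2 * (Real.sin (α * x₁)) ^ 2)
      refine this.congr_deriv ?_
      ring
    have hμBd : HasDerivAt μB
        ((Complex.sinh (θ x) * (β : ℂ)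
            * ((α ^ 2 * (Real.cosh (β * (x + x₂))) ^ 2 + β ^ 2 * (Real.sin (α * x₁)) ^ 2 : ℝ) : ℂ)
          - Complex.cosh (θ x)
            * ((2 * α ^ 2 * Real.cosh (β * (x + x₂)) * Real.sinh (β * (x + x₂)) * β : ℝ) : ℂ))
          / ((α ^ 2 * (Real.cosh (β * (x + x₂))) ^ 2 + β ^ 2 * (Real.sin (α * x₁)) ^ 2 : ℝ) : ℂ) ^ 2)
        x := by
      have hfun : μB = fun y => Complex.cosh (θ y)
          / ((α ^ 2 * (Real.cosh (β * (y + x₂))) ^ 2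
              + β ^ 2 * (Real.sin (α * x₁)) ^ 2 : ℝ) : ℂ) := funext hμB
      rw [hfun]
      exact hcoshC.div hDd.ofReal_comp hDC
    have hpyC : ((Real.cosh (β * (x + x₂)) : ℝ) : ℂ) ^ 2
        - ((Real.sinh (β * (x + x₂)) : ℝ) : ℂ) ^ 2 = 1 := by
      exact_mod_cast Real.cosh_sq_sub_sinh_sq (β * (x + x₂))
    have hcK : Complex.cos (2 * Complex.arctan (Complex.exp (θ x)))
        = -Complex.sinh (θ x) / Complex.cosh (θ x) := by
      rw [aux_cos_two_arctan h1z, h1mz, h2z]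
      field_simp
    have hsK : Complex.sin (2 * Complex.arctan (Complex.exp (θ x)))
        = (Complex.cosh (θ x))⁻¹ := by
      rw [aux_sin_two_arctan h1z, h2z]
      field_simp
    have hcu : Real.cos (2 * Real.arctan (β * Real.sin (α * x₁)
          / (α * Real.cosh (β * (x + x₂)))))
        = (α ^ 2 * (Real.cosh (β * (x + x₂))) ^ 2 - β ^ 2 * (Real.sin (α * x₁)) ^ 2)
          / (α ^ 2 * (Real.cosh (β * (x + x₂))) ^ 2 + β ^ 2 * (Real.sin (α * x₁)) ^ 2) := by
      rw [real_cos_two_arctan]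
      field_simp
    have hsu : Real.sin (2 * Real.arctan (β * Real.sin (α * x₁)
          / (α * Real.cosh (β * (x + x₂)))))
        = 2 * α * β * Real.sin (α * x₁) * Real.cosh (β * (x + x₂))
          / (α ^ 2 * (Real.cosh (β * (x + x₂))) ^ 2 + β ^ 2 * (Real.sin (α * x₁)) ^ 2) := by
      rw [real_sin_two_arctan]
      field_simp
    refine ⟨?_, ?_, ?_, ?_⟩
    · -- (a1)
      rw [hμK x, hKd.deriv]
      field_simp
    · -- (a2)
      rw [hμB x, hBd.deriv, hBt x, hC]
      push_cast
      field_simp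
      ring
    · -- (b)
      rw [hμKd.deriv, hK x, hμK x,
        show (4 : ℂ) * Complex.arctan (Complex.exp (θ x)) / 2
          = 2 * Complex.arctan (Complex.exp (θ x)) by ring, hcK]
      field_simp
      ring
    · -- (c)
      have hBsplit : ((B x : ℂ) + K x) / 2
          = ((2 * Real.arctan (β * Real.sin (α * x₁) / (α * Real.cosh (β * (x + x₂)))) : ℝ) : ℂ)
            + 2 * Complex.arctan (Complex.exp (θ x)) := by
        rw [hB x, hK x]
        push_cast
        ring
      have hBsplit' : ((B x : ℂ) - K x) / 2
          = ((2 * Real.arctan (β * Real.sin (α * x₁) / (α * Real.cosh (β * (x + x₂)))) : ℝ) : ℂ)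
            - 2 * Complex.arctan (Complex.exp (θ x)) := by
        rw [hB x, hK x]
        push_cast
        ring
      have hpyCp := hpyC
      push_cast at hpyCp
      have hμBd2 : HasDerivAt μB
          ((-((β : ℂ) * ((α ^ 2 * (Real.cosh (β * (x + x₂))) ^ 2
                - β ^ 2 * (Real.sin (α * x₁)) ^ 2 : ℝ) : ℂ)) * Complex.sinh (θ x)
              + 2 * I * (α : ℂ) ^ 2 * (β : ℂ) * ((Real.sin (α * x₁) : ℝ) : ℂ)
                * ((Real.cosh (β * (x + x₂)) : ℝ) : ℂ))
            / ((α ^ 2 * (Real.cosh (β * (x + x₂))) ^ 2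
                + β ^ 2 * (Real.sin (α * x₁)) ^ 2 : ℝ) : ℂ) ^ 2) x := by
        convert hμBd using 2
        rw [hC, hS]
        push_cast
        linear_combination (-(2 * (α:ℂ) ^ 2 * (β:ℂ)
          * Complex.cosh ((β:ℂ) * ((x:ℂ) + (x₂:ℂ)))
          * Complex.sin ((α:ℂ) * (x₁:ℂ)) * I)) * hpyCp
      have hCne2 := hCne
      rw [hC] at hCne2
      push_cast at hCne2
      have hDC2 := hDC
      push_cast at hDC2
      rw [hμBd2.deriv, hBsplit, hBsplit', Complex.cos_add, Complex.cos_sub,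
        ← Complex.ofReal_cos, ← Complex.ofReal_sin, hcu, hsu, hcK, hsK,
        hμB x, hC, hS]
      push_cast
      have hCne3 : Complex.cosh ((β:ℂ) * ((x:ℂ) + (x₂:ℂ))) * Complex.cos ((α:ℂ) * (x₁:ℂ))
          + Complex.sin ((α:ℂ) * (x₁:ℂ)) * Complex.sinh ((β:ℂ) * ((x:ℂ) + (x₂:ℂ))) * I ≠ 0 := by
        rw [mul_comm (Complex.sin _) (Complex.sinh _)]; exact hCne2
      field_simp [hCne2, hDC2, hCne3]
      ring
  exact ⟨fun x => (main x).1, fun x => (main x).2.1, fun x => (main x).2.2.1,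
    fun x => (main x).2.2.2⟩
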